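/- arXiv:2308.13197 — 4 statements merged into one kernel-verified Lean document; each statement's English description precedes it below -/
import Mathlib

section
/- Let \eta be a unimodular complex number, \phi an analytic self-map of the unit disk, \psi a nonzero analytic function on the disk, and k a positive integer, \alpha > -1. Suppose that for all z, w in the unit disk: \psi(z) w^k (1 - \eta \phi(w) z)^{k+\alpha+2} = \psi(w) z^k (1 - \eta w \phi(z))^{k+\alpha+2}. Then \psi(0) = 0, and writing \psi(z) = z^m g(z) with g holomorphic and g(0) \neq 0, one necessarily has m = k. -/
open Metric Complex Filter Topology

/-- If `ψ(z) wᵏ (1 - η φ(w) z)^{k+α+2} = ψ(w) zᵏ (1 - η w φ(z))^{k+α+2}` for all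
`z, w ∈ 𝔻`, then `ψ(0) = 0`, and the order of vanishing of `ψ` at `0` equals `k`. -/
theorem stmt6 (η : ℂ) (hη : ‖η‖ = 1) (α : ℝ) (hα : -1 < α) (k : ℕ) (hk : 1 ≤ k)
    (φ ψ : ℂ → ℂ)
    (hφ : DifferentiableOn ℂ φ (ball 0 1))
    (hφm : ∀ z ∈ ball (0 : ℂ) 1, φ z ∈ ball (0 : ℂ) 1)
    (hψ : DifferentiableOn ℂ ψ (ball 0 1))
    (hψne : ∃ z ∈ ball (0 : ℂ) 1, ψ z ≠ 0)
    (hid : ∀ z ∈ ball (0 : ℂ) 1, ∀ w ∈ ball (0 : ℂ) 1,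
      ψ z * w ^ k * (1 - η * φ w * z) ^ (((k : ℝ) + α + 2 : ℝ) : ℂ)
        = ψ w * z ^ k * (1 - η * w * φ z) ^ (((k : ℝ) + α + 2 : ℝ) : ℂ)) :
    ψ 0 = 0 ∧
    ∀ (m : ℕ) (g : ℂ → ℂ), 0 < m → DifferentiableOn ℂ g (ball 0 1) → g 0 ≠ 0 →
      (∀ z ∈ ball (0 : ℂ) 1, ψ z = z ^ m * g z) → m = k := by
  set c : ℂ := (((k : ℝ) + α + 2 : ℝ) : ℂ) with hc
  have h0mem : (0 : ℂ) ∈ ball (0 : ℂ) 1 := by simp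
  have hhalf : (1/2 : ℂ) ∈ ball (0 : ℂ) 1 := by
    simp [mem_ball, dist_eq_norm]
    norm_num
  have hψ0 : ψ 0 = 0 := by
    have h := hid (1/2) hhalf 0 h0mem
    rw [zero_pow (by omega : k ≠ 0), mul_zero, zero_mul, mul_zero, zero_mul, sub_zero, one_cpow, mul_one] at h
    rcases mul_eq_zero.mp h.symm with h | h
    · exact h
    · exact absurd h (pow_ne_zero _ (by norm_num))
  refine ⟨hψ0, ?_⟩
  intro m g hm hg hg0 hfac
  -- choose w ≠ 0 in the ball with g w ≠ 0
  have hgc : ContinuousAt g 0 := (hg.differentiableAt (isOpen_ball.mem_nhds h0mem)).continuousAt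
  have hev : ∀ᶠ z in 𝓝 (0:ℂ), g z ≠ 0 ∧ z ∈ ball (0:ℂ) 1 :=
    (hgc.eventually_ne hg0).and (isOpen_ball.eventually_mem h0mem)
  obtain ⟨w, ⟨hgw, hwball⟩, hw0⟩ :=
    ((hev.filter_mono nhdsWithin_le_nhds).and eventually_mem_nhdsWithin).exists
      (f := 𝓝[≠] (0:ℂ))
  rw [Set.mem_compl_iff, Set.mem_singleton_iff] at hw0
  set A : ℂ → ℂ := fun z => (1 - η * φ w * z) ^ c with hA
  set B : ℂ → ℂ := fun z => (1 - η * w * φ z) ^ c with hB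
  -- norms
  have hφw : ‖φ w‖ < 1 := by simpa [mem_ball, dist_eq_norm] using hφm w hwball
  have hφ0 : ‖φ 0‖ < 1 := by simpa [mem_ball, dist_eq_norm] using hφm 0 h0mem
  have hwn : ‖w‖ < 1 := by simpa [mem_ball, dist_eq_norm] using hwball
  have hslit : ∀ u : ℂ, ‖u‖ < 1 → (1 - u) ∈ slitPlane := by
    intro u hu
    rw [Complex.mem_slitPlane_iff]
    left
    have : |u.re| ≤ ‖u‖ := Complex.abs_re_le_norm u
    simp only [Complex.sub_re, Complex.one_re]
    have := abs_le.mp this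
    linarith
  have hb0 : ‖η * w * φ 0‖ < 1 := by
    rw [norm_mul, norm_mul, hη, one_mul]
    calc ‖w‖ * ‖φ 0‖ ≤ ‖w‖ * 1 := by
          exact mul_le_mul_of_nonneg_left hφ0.le (norm_nonneg _)
      _ < 1 := by simpa using hwn
  have hAcont : ContinuousAt A 0 :=
    ContinuousAt.cpow (by fun_prop) continuousAt_const
      (by simpa using hslit (η * φ w * 0) (by simp))
  have hφc : ContinuousAt φ 0 := (hφ.differentiableAt (isOpen_ball.mem_nhds h0mem)).continuousAt
  have hBcont : ContinuousAt B 0 :=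
    ContinuousAt.cpow (by fun_prop) continuousAt_const (hslit _ hb0)
  have hA0 : A 0 = 1 := by simp [hA, one_cpow]
  have hB0 : B 0 ≠ 0 := by
    rw [hB]
    simp only
    rw [Ne, cpow_eq_zero_iff]
    rintro ⟨h1, -⟩
    exact Complex.slitPlane_ne_zero (hslit _ hb0) h1
  -- main identity with ψ factored
  have key : ∀ z ∈ ball (0:ℂ) 1, z ^ m * g z * w ^ k * A z = w ^ m * g w * z ^ k * B z := by
    intro z hz
    have h := hid z hz w hwball
    rw [hfac z hz, hfac w hwball] at h
    exact h
  -- eventually in 𝓝[≠]0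
  have hevball : ∀ᶠ z in 𝓝[≠] (0:ℂ), z ∈ ball (0:ℂ) 1 ∧ z ≠ 0 :=
    ((isOpen_ball.eventually_mem h0mem).filter_mono nhdsWithin_le_nhds).and
      (by simpa using eventually_mem_nhdsWithin (s := {(0:ℂ)}ᶜ))
  rcases lt_trichotomy m k with hlt | heq | hgt
  · exfalso
    have key2 : ∀ᶠ z in 𝓝[≠] (0:ℂ),
        g z * (w ^ k * A z) = z ^ (k - m) * (w ^ m * g w * B z) := by
      filter_upwards [hevball] with z ⟨hz, hz0⟩
      have h := key z hz
      have hzk : (z:ℂ) ^ k = z ^ m * z ^ (k - m) := by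
        rw [← pow_add]; congr 1; omega
      rw [hzk] at h
      apply mul_left_cancel₀ (pow_ne_zero m hz0)
      linear_combination h
    have h1 : Tendsto (fun z => g z * (w ^ k * A z)) (𝓝[≠] (0:ℂ))
        (𝓝 (g 0 * (w ^ k * A 0))) :=
      ((hgc.mul (continuousAt_const.mul hAcont)).tendsto).mono_left nhdsWithin_le_nhds
    have h2 : Tendsto (fun z : ℂ => z ^ (k - m) * (w ^ m * g w * B z)) (𝓝[≠] (0:ℂ))
        (𝓝 ((0:ℂ) ^ (k - m) * (w ^ m * g w * B 0))) :=
      (((continuousAt_pow _ _).mul (continuousAt_const.mul hBcont)).tendsto).mono_left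
        nhdsWithin_le_nhds
    have hz0 : ((0:ℂ) ^ (k - m) * (w ^ m * g w * B 0)) = 0 := by
      rw [zero_pow (by omega : k - m ≠ 0), zero_mul]
    rw [hz0] at h2
    have := tendsto_nhds_unique (h1.congr' key2) h2
    rw [hA0, mul_one] at this
    exact (mul_ne_zero hg0 (pow_ne_zero k hw0)) this
  · exact heq
  · exfalso
    have key2 : ∀ᶠ z in 𝓝[≠] (0:ℂ),
        z ^ (m - k) * (g z * (w ^ k * A z)) = w ^ m * g w * B z := by
      filter_upwards [hevball] with z ⟨hz, hz0⟩
      have h := key z hz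
      have hzm : (z:ℂ) ^ m = z ^ k * z ^ (m - k) := by
        rw [← pow_add]; congr 1; omega
      rw [hzm] at h
      apply mul_left_cancel₀ (pow_ne_zero k hz0)
      linear_combination h
    have h1 : Tendsto (fun z : ℂ => z ^ (m - k) * (g z * (w ^ k * A z))) (𝓝[≠] (0:ℂ))
        (𝓝 ((0:ℂ) ^ (m - k) * (g 0 * (w ^ k * A 0)))) :=
      (((continuousAt_pow _ _).mul (hgc.mul (continuousAt_const.mul hAcont))).tendsto).mono_left
        nhdsWithin_le_nhds
    have h2 : Tendsto (fun z : ℂ => w ^ m * g w * B z) (𝓝[≠] (0:ℂ))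
        (𝓝 (w ^ m * g w * B 0)) :=
      ((continuousAt_const.mul hBcont).tendsto).mono_left nhdsWithin_le_nhds
    have hz0 : ((0:ℂ) ^ (m - k) * (g 0 * (w ^ k * A 0))) = 0 := by
      rw [zero_pow (by omega : m - k ≠ 0), zero_mul]
    rw [hz0] at h1
    have := tendsto_nhds_unique (h1.congr' key2) h2
    exact (mul_ne_zero (mul_ne_zero (pow_ne_zero m hw0) hgw) hB0) this.symm
end

section
/- Let \eta be a unimodular complex number, \alpha > -1, k a positive integer, b \in \mathbb{D}, and \phi an analytic self-map of the unit disk with \phi(0) = b. If (1-\eta b z)^{k+\alpha+2}(1-\eta w \phi(z))^{k+\alpha+2} = (1-\eta b w)^{k+\alpha+2}(1-\eta \phi(w) z)^{k+\alpha+2} holds for all z, w in the unit disk, then \phi(z) = b + c z/(1 - \eta b z) for all z, where c = \phi'(0). -/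
open Metric Complex

lemma slit_aux (u : ℂ) (hu : ‖u‖ < 1) : (1 - u) ∈ Complex.slitPlane := by
  rw [Complex.mem_slitPlane_iff]
  left
  have : u.re ≤ ‖u‖ := Complex.re_le_norm u
  simp only [Complex.sub_re, Complex.one_re]
  linarith

/-- If `(1-ηbz)^{k+α+2}(1-ηwφ(z))^{k+α+2} = (1-ηbw)^{k+α+2}(1-ηφ(w)z)^{k+α+2}`
for all `z, w ∈ 𝔻`, where `φ(0) = b`, then `φ(z) = b + cz/(1-ηbz)` with `c = φ'(0)`. -/
theorem stmt7 (η : ℂ) (hη : ‖η‖ = 1) (α : ℝ) (hα : -1 < α) (k : ℕ) (hk : 1 ≤ k)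
    (b : ℂ) (hb : b ∈ ball (0 : ℂ) 1)
    (φ : ℂ → ℂ) (hφ : DifferentiableOn ℂ φ (ball 0 1))
    (hφm : ∀ z ∈ ball (0 : ℂ) 1, φ z ∈ ball (0 : ℂ) 1)
    (hφ0 : φ 0 = b)
    (hid : ∀ z ∈ ball (0 : ℂ) 1, ∀ w ∈ ball (0 : ℂ) 1,
      (1 - η * b * z) ^ (((k : ℝ) + α + 2 : ℝ) : ℂ) *
          (1 - η * w * φ z) ^ (((k : ℝ) + α + 2 : ℝ) : ℂ)
        = (1 - η * b * w) ^ (((k : ℝ) + α + 2 : ℝ) : ℂ) *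
          (1 - η * φ w * z) ^ (((k : ℝ) + α + 2 : ℝ) : ℂ)) :
    ∀ z ∈ ball (0 : ℂ) 1, φ z = b + deriv φ 0 * z / (1 - η * b * z) := by
  intro z hz
  set s : ℂ := (((k : ℝ) + α + 2 : ℝ) : ℂ) with hs
  have hzn : ‖z‖ < 1 := by simpa using hz
  have hbn : ‖b‖ < 1 := by simpa using hb
  have hφzn : ‖φ z‖ < 1 := by simpa using hφm z hz
  have h0 : (0 : ℂ) ∈ ball (0 : ℂ) 1 := by simp
  have hηbz : ‖η * b * z‖ < 1 := by
    rw [norm_mul, norm_mul, hη, one_mul]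
    calc ‖b‖ * ‖z‖ ≤ ‖b‖ * 1 := by
          exact mul_le_mul_of_nonneg_left hzn.le (norm_nonneg _)
      _ < 1 := by simpa using hbn
  have hD : (1 : ℂ) - η * b * z ≠ 0 := by
    intro h
    rw [sub_eq_zero] at h
    rw [← h] at hηbz
    simp at hηbz
  have hslitD : (1 - η * b * z) ∈ Complex.slitPlane := slit_aux _ hηbz
  have hs0 : s ≠ 0 := by
    rw [hs]
    simp only [ne_eq, Complex.ofReal_eq_zero]
    have : (1 : ℝ) ≤ (k : ℝ) := by exact_mod_cast hk
    intro h; linarith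
  have hη0 : η ≠ 0 := by
    intro h; rw [h] at hη; simp at hη
  set c := deriv φ 0 with hc
  -- derivative of φ at 0
  have hφd : HasDerivAt φ c 0 := by
    have := (hφ 0 h0).differentiableAt ((isOpen_ball).mem_nhds h0)
    exact this.hasDerivAt
  -- F w := LHS, G w := RHS, F = G near 0
  set A : ℂ := (1 - η * b * z) ^ s with hA
  have hF : HasDerivAt (fun w => A * (1 - η * w * φ z) ^ s)
      (A * (s * (1 : ℂ) ^ (s - 1) * (-(η * φ z)))) 0 := by
    have h1 : HasDerivAt (fun w : ℂ => 1 - η * w * φ z) (-(η * φ z)) 0 := by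
      have : HasDerivAt (fun w : ℂ => η * w * φ z) (η * φ z) 0 := by
        simpa using ((hasDerivAt_id (0 : ℂ)).const_mul η).mul_const (φ z)
      simpa [Pi.sub_def] using (hasDerivAt_const (0 : ℂ) (1 : ℂ)).sub this
    have h2 := h1.cpow_const (c := s) (by simp [Complex.one_mem_slitPlane] : (1 : ℂ) - η * 0 * φ z ∈ Complex.slitPlane)
    simpa [mul_comm, mul_left_comm, mul_assoc] using h2.const_mul A
  have hG : HasDerivAt (fun w => (1 - η * b * w) ^ s * (1 - η * φ w * z) ^ s)
      ((s * (1 : ℂ) ^ (s - 1) * (-(η * b))) * (1 - η * b * z) ^ s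
        + (1 : ℂ) ^ s * (s * (1 - η * b * z) ^ (s - 1) * (-(η * c * z)))) 0 := by
    have h1 : HasDerivAt (fun w : ℂ => 1 - η * b * w) (-(η * b)) 0 := by
      have : HasDerivAt (fun w : ℂ => η * b * w) (η * b) 0 := by
        simpa using (hasDerivAt_id (0 : ℂ)).const_mul (η * b)
      simpa [Pi.sub_def] using (hasDerivAt_const (0 : ℂ) (1 : ℂ)).sub this
    have h1' := h1.cpow_const (c := s) (by simp [Complex.one_mem_slitPlane] : (1 : ℂ) - η * b * 0 ∈ Complex.slitPlane)
    have h2 : HasDerivAt (fun w : ℂ => 1 - η * φ w * z) (-(η * c * z)) 0 := by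
      have : HasDerivAt (fun w : ℂ => η * φ w * z) (η * c * z) 0 := by
        simpa [mul_assoc] using (hφd.const_mul η).mul_const z
      simpa [Pi.sub_def] using (hasDerivAt_const (0 : ℂ) (1 : ℂ)).sub this
    have h2' := h2.cpow_const (c := s) (by simpa [hφ0] using hslitD : (1 : ℂ) - η * φ 0 * z ∈ Complex.slitPlane)
    have := h1'.mul h2'
    simpa [hφ0, Pi.mul_def] using this
  -- the two functions agree near 0
  have heq : (fun w => A * (1 - η * w * φ z) ^ s)
      =ᶠ[nhds (0 : ℂ)] (fun w => (1 - η * b * w) ^ s * (1 - η * φ w * z) ^ s) := by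
    filter_upwards [isOpen_ball.mem_nhds h0] with w hw
    exact hid z hz w hw
  have hderiv_eq : A * (s * (1 : ℂ) ^ (s - 1) * (-(η * φ z)))
      = (s * (1 : ℂ) ^ (s - 1) * (-(η * b))) * (1 - η * b * z) ^ s
        + (1 : ℂ) ^ s * (s * (1 - η * b * z) ^ (s - 1) * (-(η * c * z))) := by
    have hF' : HasDerivAt (fun w => (1 - η * b * w) ^ s * (1 - η * φ w * z) ^ s)
        (A * (s * (1 : ℂ) ^ (s - 1) * (-(η * φ z)))) 0 := hF.congr_of_eventuallyEq heq.symm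
    exact hF'.unique hG
  -- simplify
  rw [Complex.one_cpow, Complex.one_cpow] at hderiv_eq
  set B : ℂ := (1 - η * b * z) ^ (s - 1) with hB
  have hAB : A = B * (1 - η * b * z) := by
    rw [hA, hB, Complex.cpow_sub _ _ hD, Complex.cpow_one, div_mul_cancel₀ _ hD]
  have hB0 : B ≠ 0 := by
    rw [hB]
    intro h
    rw [Complex.cpow_eq_zero_iff] at h
    exact hD h.1
  rw [← hA] at hderiv_eq
  have hsB : s * η * B ≠ 0 := by
    exact mul_ne_zero (mul_ne_zero hs0 hη0) hB0
  have h2 : (s * η * B) * ((1 - η * b * z) * φ z - (b * (1 - η * b * z) + c * z)) = 0 := by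
    linear_combination (-1 : ℂ) * hderiv_eq + (s * η * b - s * η * φ z) * hAB
  have key : (1 - η * b * z) * φ z = b * (1 - η * b * z) + c * z := by
    rcases mul_eq_zero.mp h2 with h | h
    · exact absurd h hsB
    · exact sub_eq_zero.mp h
  rw [← sub_eq_iff_eq_add', eq_div_iff hD]
  linear_combination key
end

section
/- Suppose L is a compact operator on a Hilbert space with orthonormal basis (e_m)_{m \geq 0} such that L e_m = \lambda_m e_m for a sequence of complex numbers (\lambda_m). Then the spectrum of L equals the closure of \{\lambda_m : m \geq 0\} \cup \{0\}; in particular, applied with \lambda_m = \sum_{k=1}^{\min(m,n)} c_k a_k \frac{m!}{(m-k)!} c^{m-k}, the spectrum of the compact operator L f = \sum_{k=1}^n c_k a_k z^k f^{(k)}(cz) on the weighted Bergman space is \{0\} \cup \{\lambda_m : m \geq 1\}. -/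
open scoped InnerProductSpace
open Filter

section Aux

variable {H : Type*} [NormedAddCommGroup H] [InnerProductSpace ℂ H] [CompleteSpace H]

lemma diag_inner' (e : HilbertBasis ℕ ℂ H) (T : H →L[ℂ] H)
    (lam : ℕ → ℂ) (hT : ∀ m : ℕ, T (e m) = lam m • e m) (m : ℕ) (x : H) :
    ⟪e m, T x⟫_ℂ = lam m * ⟪e m, x⟫_ℂ := by
  have hd : Dense (Submodule.span ℂ (Set.range e) : Set H) :=
    Submodule.dense_iff_topologicalClosure_eq_top.mpr e.dense_span
  have := ContinuousLinearMap.ext_on (R₁ := ℂ) hd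
    (f := ((innerSL ℂ (e m)).comp T)) (g := lam m • innerSL ℂ (e m)) ?_
  · have h2 := DFunLike.congr_fun this x
    simpa using h2
  · rintro _ ⟨j, rfl⟩
    have hmj := orthonormal_iff_ite.mp e.orthonormal m j
    simp only [ContinuousLinearMap.comp_apply, ContinuousLinearMap.smul_apply, innerSL_apply_apply,
      hT j, inner_smul_right, hmj]
    by_cases h : m = j <;> simp [h]

lemma parseval' (e : HilbertBasis ℕ ℂ H) (x : H) :
    HasSum (fun m => ‖⟪e m, x⟫_ℂ‖ ^ 2) (‖x‖ ^ 2) := by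
  have h := e.hasSum_inner_mul_inner x x
  rw [inner_self_eq_norm_sq_to_K] at h
  have heq : ∀ m, ⟪x, e m⟫_ℂ * ⟪e m, x⟫_ℂ = ((‖⟪e m, x⟫_ℂ‖ ^ 2 : ℝ) : ℂ) := by
    intro m
    have h1 : ⟪x, e m⟫_ℂ = (starRingEnd ℂ) ⟪e m, x⟫_ℂ := (inner_conj_symm _ _).symm
    rw [h1, RCLike.conj_mul]
    norm_cast
  rw [funext heq] at h
  rw [← RCLike.ofReal_pow] at h
  exact (RCLike.hasSum_ofReal ℂ).mp h

lemma lam_tendsto' (e : HilbertBasis ℕ ℂ H) (T : H →L[ℂ] H)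
    (hcomp : IsCompactOperator T)
    (lam : ℕ → ℂ) (hT : ∀ m : ℕ, T (e m) = lam m • e m) :
    Tendsto lam atTop (nhds 0) := by
  by_contra hcon
  rw [Metric.tendsto_atTop] at hcon
  push_neg at hcon
  obtain ⟨ε, hε, hfreq⟩ := hcon
  have hfr : ∃ᶠ n in atTop, ε ≤ ‖lam n‖ := by
    rw [Filter.frequently_atTop]
    intro N
    obtain ⟨n, hn, h⟩ := hfreq N
    exact ⟨n, hn, by simpa [dist_eq_norm] using h⟩
  obtain ⟨φ, hφ, hφε⟩ := Filter.extraction_of_frequently_atTop hfr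
  obtain ⟨K, hK, hmem⟩ := hcomp
  obtain ⟨r, hr, hball⟩ := Metric.mem_nhds_iff.mp hmem
  set c : ℂ := ((r / 2 : ℝ) : ℂ) with hc
  have hnormc : ‖c‖ = r / 2 := by
    rw [hc, Complex.norm_real, Real.norm_eq_abs, abs_of_pos (by linarith)]
  have hcball : ∀ m, c • e m ∈ Metric.ball (0 : H) r := by
    intro m
    have h1 : ‖e m‖ = 1 := e.orthonormal.1 m
    simp only [Metric.mem_ball, dist_zero_right, norm_smul, h1, mul_one, hnormc]
    linarith
  have hTm : ∀ m, T (c • e m) ∈ K := fun m => hball (hcball m)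
  obtain ⟨x, -, ψ, hψ, hconv⟩ := hK.tendsto_subseq (x := fun k => T (c • e (φ k))) (fun k => hTm _)
  have hcauchy := hconv.cauchySeq
  rw [Metric.cauchySeq_iff] at hcauchy
  obtain ⟨N, hN⟩ := hcauchy (r / 2 * ε) (by positivity)
  have h2 : dist (T (c • e (φ (ψ (N + 1))))) (T (c • e (φ (ψ N)))) < r / 2 * ε := by
    simpa using hN (N + 1) (by omega) N (le_refl N)
  -- now compute the distance from below
  set i := φ (ψ (N + 1)) with hi
  set j := φ (ψ N) with hj
  have hij : i ≠ j := ne_of_gt (hφ (hψ (Nat.lt_succ_self N)))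
  have hval : ∀ m, T (c • e m) = (c * lam m) • e m := by
    intro m
    rw [map_smul, hT m, smul_smul]
  have hinner0 : ⟪(c * lam i) • e i, (c * lam j) • e j⟫_ℂ = 0 := by
    rw [inner_smul_left, inner_smul_right]
    have := orthonormal_iff_ite.mp e.orthonormal i j
    rw [this, if_neg hij]
    ring
  have hnormi : ∀ m, ‖(c * lam m) • e m‖ = r / 2 * ‖lam m‖ := by
    intro m
    rw [norm_smul, norm_mul, hnormc, e.orthonormal.1 m, mul_one]
  have hdist : dist (T (c • e i)) (T (c • e j)) ^ 2 =
      (r / 2 * ‖lam i‖) ^ 2 + (r / 2 * ‖lam j‖) ^ 2 := by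
    rw [hval i, hval j, dist_eq_norm, @norm_sub_sq ℂ, hinner0, hnormi, hnormi]
    simp
  have hεi : r / 2 * ε ≤ r / 2 * ‖lam i‖ := by
    exact mul_le_mul_of_nonneg_left (hφε (ψ (N + 1))) (by positivity)
  have hεj : r / 2 * ε ≤ r / 2 * ‖lam j‖ := by
    exact mul_le_mul_of_nonneg_left (hφε (ψ N)) (by positivity)
  have hpos : (0:ℝ) < r / 2 * ε := by positivity
  have hsq : (r / 2 * ε) ^ 2 < dist (T (c • e i)) (T (c • e j)) ^ 2 := by
    rw [hdist]
    nlinarith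
  have hlt : r / 2 * ε < dist (T (c • e i)) (T (c • e j)) :=
    lt_of_pow_lt_pow_left₀ 2 dist_nonneg hsq
  linarith [hlt, h2]

lemma spec_eq' (e : HilbertBasis ℕ ℂ H) (T : H →L[ℂ] H)
    (hcomp : IsCompactOperator T)
    (lam : ℕ → ℂ) (hT : ∀ m : ℕ, T (e m) = lam m • e m) :
    spectrum ℂ T = closure (Set.range lam ∪ {0}) := by
  have htend := lam_tendsto' e T hcomp lam hT
  have hem : ∀ m, e m ≠ 0 := fun m => e.orthonormal.ne_zero m
  apply Set.Subset.antisymm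
  · -- spectrum ⊆ closure
    intro z hz
    by_contra hzc
    -- set up quantitative separation
    have hSne : (Set.range lam ∪ {0} : Set ℂ).Nonempty := ⟨0, Or.inr rfl⟩
    have hδpos : 0 < Metric.infDist z (Set.range lam ∪ {0}) := by
      rw [← Metric.infDist_closure]
      exact (IsClosed.notMem_iff_infDist_pos isClosed_closure
        (hSne.closure)).mp hzc
    set δ := Metric.infDist z (Set.range lam ∪ {0}) with hδ
    have hδle : ∀ m, δ ≤ ‖z - lam m‖ := by
      intro m
      have hmem' : lam m ∈ Set.range lam ∪ {0} := Or.inl ⟨m, rfl⟩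
      have := Metric.infDist_le_dist_of_mem (x := z) hmem'
      rwa [dist_eq_norm] at this
    have hzne : ∀ m, z - lam m ≠ 0 := by
      intro m h0
      have := hδle m
      rw [h0, norm_zero] at this
      linarith
    set f : H →L[ℂ] H := algebraMap ℂ (H →L[ℂ] H) z - T with hf
    have hfx : ∀ x, f x = z • x - T x := by
      intro x
      simp [hf, Algebra.algebraMap_eq_smul_one]
    have hinner : ∀ x m, ⟪e m, f x⟫_ℂ = (z - lam m) * ⟪e m, x⟫_ℂ := by
      intro x m
      rw [hfx, inner_sub_right, inner_smul_right, diag_inner' e T lam hT]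
      ring
    have hlow : ∀ x, ‖x‖ ≤ δ⁻¹ * ‖f x‖ := by
      intro x
      have h1 := (parseval' e x).mul_left (δ ^ 2)
      have h2 := parseval' e (f x)
      have key : δ ^ 2 * ‖x‖ ^ 2 ≤ ‖f x‖ ^ 2 := by
        refine hasSum_le (fun m => ?_) h1 h2
        rw [hinner x m, norm_mul, mul_pow]
        have : δ ^ 2 ≤ ‖z - lam m‖ ^ 2 :=
          pow_le_pow_left₀ hδpos.le (hδle m) 2
        have hnn : (0:ℝ) ≤ ‖⟪e m, x⟫_ℂ‖ ^ 2 := by positivity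
        nlinarith
      have key2 : (δ * ‖x‖) ^ 2 ≤ ‖f x‖ ^ 2 := by rw [mul_pow]; exact key
      have h3 : δ * ‖x‖ ≤ ‖f x‖ :=
        le_of_pow_le_pow_left₀ two_ne_zero (norm_nonneg _) key2
      calc ‖x‖ = δ⁻¹ * (δ * ‖x‖) := by
            rw [← mul_assoc, inv_mul_cancel₀ hδpos.ne', one_mul]
        _ ≤ δ⁻¹ * ‖f x‖ := mul_le_mul_of_nonneg_left h3 (by positivity)
    have hanti : AntilipschitzWith (δ⁻¹).toNNReal f := by
      apply f.antilipschitz_of_bound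
      intro x
      rw [Real.coe_toNNReal _ (by positivity)]
      exact hlow x
    have hinj : Function.Injective f := hanti.injective
    have hclosedr : IsClosed (Set.range f) := hanti.isClosed_range f.uniformContinuous
    have hsurj : Function.Surjective f := by
      have hsub : (Submodule.span ℂ (Set.range e) : Set H) ⊆ Set.range f := by
        intro y hy
        have hspan : Submodule.span ℂ (Set.range e) ≤ LinearMap.range (f : H →ₗ[ℂ] H) := by
          rw [Submodule.span_le]
          rintro _ ⟨m, rfl⟩
          refine ⟨(z - lam m)⁻¹ • e m, ?_⟩
          have : f ((z - lam m)⁻¹ • e m) = ((z - lam m)⁻¹ * (z - lam m)) • e m := by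
            rw [hfx, map_smul, hT m, smul_smul, smul_smul]
            rw [← sub_smul]
            congr 1
            ring
          simp only [ContinuousLinearMap.coe_coe]
          rw [this, inv_mul_cancel₀ (hzne m), one_smul]
        exact hspan hy
      have hd : Dense (Submodule.span ℂ (Set.range e) : Set H) :=
        Submodule.dense_iff_topologicalClosure_eq_top.mpr e.dense_span
      intro y
      have : y ∈ closure (Submodule.span ℂ (Set.range e) : Set H) := by
        rw [hd.closure_eq]; trivial
      exact hclosedr.closure_subset_iff.mpr hsub this
    have : IsUnit f := ContinuousLinearMap.isUnit_iff_bijective.mpr ⟨hinj, hsurj⟩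
    exact (spectrum.notMem_iff.mpr this) hz
  · -- closure ⊆ spectrum
    have hrange : Set.range lam ⊆ spectrum ℂ T := by
      rintro _ ⟨m, rfl⟩
      rw [spectrum.mem_iff]
      intro hunit
      have hbij := ContinuousLinearMap.isUnit_iff_bijective.mp hunit
      have h0 : (algebraMap ℂ (H →L[ℂ] H) (lam m) - T) (e m) = 0 := by
        simp [Algebra.algebraMap_eq_smul_one, hT m]
      have h0' : (algebraMap ℂ (H →L[ℂ] H) (lam m) - T) (0 : H) = 0 := by simp
      exact hem m (hbij.1 (h0.trans h0'.symm))
    have h0mem : (0 : ℂ) ∈ closure (Set.range lam) :=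
      mem_closure_of_tendsto htend (Eventually.of_forall fun m => Set.mem_range_self m)
    have hsub : Set.range lam ∪ {0} ⊆ closure (Set.range lam) := by
      rintro z (hz | hz)
      · exact subset_closure hz
      · rw [Set.mem_singleton_iff] at hz
        exact hz ▸ h0mem
    calc closure (Set.range lam ∪ {0}) ⊆ closure (closure (Set.range lam)) :=
          closure_mono hsub
      _ = closure (Set.range lam) := closure_closure
      _ ⊆ spectrum ℂ T := closure_minimal hrange (spectrum.isClosed T)

end Aux

/-- The spectrum of a compact operator acting diagonally on an orthonormal basis
`(e_m)` with eigenvalues `λ_m` is the closure of `{λ_m} ∪ {0}`; in particular,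
for `λ_m = ∑_{k=1}^{min(m,n)} c_k a_k (m!/(m-k)!) c^{m-k}` the spectrum is
`{0} ∪ {λ_m : m ≥ 1}`. -/
theorem stmt17 {H : Type*} [NormedAddCommGroup H] [InnerProductSpace ℂ H]
    [CompleteSpace H]
    (e : HilbertBasis ℕ ℂ H)
    (T : H →L[ℂ] H) (hcomp : IsCompactOperator T)
    (lam : ℕ → ℂ) (hT : ∀ m : ℕ, T (e m) = lam m • e m)
    (n : ℕ) (a c : ℕ → ℂ) (cc : ℂ) :
    spectrum ℂ T = closure (Set.range lam ∪ {0}) ∧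
    ((∀ m : ℕ, lam m = ∑ k ∈ Finset.Icc 1 (min m n),
        c k * a k * ((m.factorial : ℂ) / ((m - k).factorial : ℂ)) * cc ^ (m - k)) →
      spectrum ℂ T = {0} ∪ {z : ℂ | ∃ m : ℕ, 1 ≤ m ∧ z = lam m}) := by
  have hspec := spec_eq' e T hcomp lam hT
  refine ⟨hspec, fun hlam => ?_⟩
  have htend := lam_tendsto' e T hcomp lam hT
  have hlam0 : lam 0 = 0 := by
    rw [hlam 0]
    simp
  have hSeq : Set.range lam ∪ {0} = insert (0 : ℂ) (Set.range lam) := by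
    rw [Set.union_comm, Set.singleton_union]
  have hclosed : IsClosed (insert (0 : ℂ) (Set.range lam)) :=
    htend.isCompact_insert_range.isClosed
  have hset : insert (0 : ℂ) (Set.range lam) =
      {0} ∪ {z : ℂ | ∃ m : ℕ, 1 ≤ m ∧ z = lam m} := by
    ext z
    constructor
    · rintro (rfl | ⟨m, rfl⟩)
      · exact Or.inl rfl
      · rcases Nat.eq_zero_or_pos m with rfl | hm
        · exact Or.inl (by simp [hlam0])
        · exact Or.inr ⟨m, hm, rfl⟩
    · rintro (rfl | ⟨m, hm, rfl⟩)
      · exact Or.inl rfl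
      · exact Or.inr ⟨m, rfl⟩
  rw [hspec, hSeq, hclosed.closure_eq, hset]
end

section
/- Let \phi(z) = cz with c \in \mathbb{C}, \psi_k(z) = a_k z^k for k = 1, \ldots, n, and L f(z) = \sum_{k=1}^n c_k a_k z^k f^{(k)}(cz). If f is holomorphic on the unit disk, \lambda \in \mathbb{C}, L f = \lambda f, f is not identically zero, and m is the order of vanishing of f at 0 (i.e., f^{(j)}(0) = 0 for j < m and f^{(m)}(0) \neq 0), then \lambda = \sum_{k=1}^{\min(m,n)} c_k a_k \frac{m!}{(m-k)!} c^{m-k} (interpreted as 0 when m = 0). -/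
open Metric Complex

section Aux

variable {U : Set ℂ}

/-- Constant multiple: iterated derivative at `0` for a function analytic near `0`. -/
lemma aux_iter_const_mul (hU : IsOpen U) (h0 : (0 : ℂ) ∈ U) (b : ℂ) :
    ∀ (m : ℕ) (g : ℂ → ℂ), AnalyticOnNhd ℂ g U →
      iteratedDeriv m (fun z => b * g z) 0 = b * iteratedDeriv m g 0 := by
  intro m
  induction m with
  | zero => intro g _; simp
  | succ m IH =>
    intro g hg
    rw [iteratedDeriv_succ', iteratedDeriv_succ']
    have hev : (deriv fun z => b * g z) =ᶠ[nhds (0 : ℂ)] fun z => b * deriv g z := by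
      filter_upwards [hU.mem_nhds h0] with z hz
      exact deriv_const_mul b (hg z hz).differentiableAt
    rw [Filter.EventuallyEq.iteratedDeriv_eq m hev]
    exact IH (deriv g) (hg.deriv_of_isOpen hU)

/-- Finite sums: iterated derivative at `0` for functions analytic near `0`. -/
lemma aux_iter_sum (hU : IsOpen U) (h0 : (0 : ℂ) ∈ U) {ι : Type*} (s : Finset ι) :
    ∀ (m : ℕ) (G : ι → ℂ → ℂ), (∀ i ∈ s, AnalyticOnNhd ℂ (G i) U) →
      iteratedDeriv m (fun z => ∑ i ∈ s, G i z) 0 = ∑ i ∈ s, iteratedDeriv m (G i) 0 := by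
  intro m
  induction m with
  | zero => intro G _; simp
  | succ m IH =>
    intro G hG
    rw [iteratedDeriv_succ']
    have hev : (deriv fun z => ∑ i ∈ s, G i z) =ᶠ[nhds (0 : ℂ)]
        fun z => ∑ i ∈ s, deriv (G i) z := by
      filter_upwards [hU.mem_nhds h0] with z hz
      exact deriv_fun_sum fun i hi => ((hG i hi) z hz).differentiableAt
    rw [Filter.EventuallyEq.iteratedDeriv_eq m hev,
      IH (fun i => deriv (G i)) (fun i hi => (hG i hi).deriv_of_isOpen hU)]
    exact Finset.sum_congr rfl fun i _ => (congrFun iteratedDeriv_succ' (0:ℂ)).symm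

/-- Two-term sums. -/
lemma aux_iter_add (hU : IsOpen U) (h0 : (0 : ℂ) ∈ U) (m : ℕ) (g h : ℂ → ℂ)
    (hg : AnalyticOnNhd ℂ g U) (hh : AnalyticOnNhd ℂ h U) :
    iteratedDeriv m (fun z => g z + h z) 0 = iteratedDeriv m g 0 + iteratedDeriv m h 0 := by
  induction m generalizing g h with
  | zero => simp
  | succ m IH =>
    rw [iteratedDeriv_succ', iteratedDeriv_succ', iteratedDeriv_succ']
    have hev : (deriv fun z => g z + h z) =ᶠ[nhds (0 : ℂ)] fun z => deriv g z + deriv h z := by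
      filter_upwards [hU.mem_nhds h0] with z hz
      exact deriv_add (hg z hz).differentiableAt (hh z hz).differentiableAt
    rw [Filter.EventuallyEq.iteratedDeriv_eq m hev]
    exact IH (deriv g) (deriv h) (hg.deriv_of_isOpen hU) (hh.deriv_of_isOpen hU)

/-- `z * g z`: the `m`-th derivative at `0`. -/
lemma aux_iter_id_mul (hU : IsOpen U) (h0 : (0 : ℂ) ∈ U) :
    ∀ (m : ℕ) (g : ℂ → ℂ), AnalyticOnNhd ℂ g U →
      iteratedDeriv m (fun z => z * g z) 0 = (m : ℂ) * iteratedDeriv (m - 1) g 0 := by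
  intro m
  induction m with
  | zero => intro g _; simp
  | succ m IH =>
    intro g hg
    rw [iteratedDeriv_succ']
    have hev : (deriv fun z => z * g z) =ᶠ[nhds (0 : ℂ)]
        fun z => g z + z * deriv g z := by
      filter_upwards [hU.mem_nhds h0] with z hz
      rw [deriv_fun_mul differentiableAt_fun_id (hg z hz).differentiableAt]
      simp
    rw [Filter.EventuallyEq.iteratedDeriv_eq m hev,
      aux_iter_add hU h0 m g (fun z => z * deriv g z) hg
        ((analyticOnNhd_id).mul (hg.deriv_of_isOpen hU)),
      IH (deriv g) (hg.deriv_of_isOpen hU)]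
    cases m with
    | zero => simp
    | succ j =>
      rw [show j + 1 - 1 = j from rfl, ← iteratedDeriv_succ']
      push_cast
      ring

/-- `z ^ k * g z`: the `m`-th derivative at `0`, via the descending factorial. -/
lemma aux_iter_pow_mul (hU : IsOpen U) (h0 : (0 : ℂ) ∈ U) :
    ∀ (k m : ℕ) (g : ℂ → ℂ), AnalyticOnNhd ℂ g U →
      iteratedDeriv m (fun z => z ^ k * g z) 0
        = (m.descFactorial k : ℂ) * iteratedDeriv (m - k) g 0 := by
  intro k
  induction k with
  | zero => intro m g _; simp
  | succ k IH =>
    intro m g hg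
    have h1 : (fun z => z ^ (k + 1) * g z) = fun z => z * (z ^ k * g z) := by
      funext z; ring
    rw [h1, aux_iter_id_mul hU h0 m (fun z => z ^ k * g z)
        ((analyticOnNhd_id.pow k).mul hg),
      IH (m - 1) g hg, ← mul_assoc]
    congr 1
    · cases m with
      | zero => simp
      | succ j =>
        rw [Nat.succ_sub_one, Nat.succ_descFactorial_succ]
        push_cast; ring
    · congr 1
      omega

/-- Iterated derivatives compose additively. -/
lemma aux_iter_iter : ∀ (k j : ℕ) (f : ℂ → ℂ),
    iteratedDeriv j (iteratedDeriv k f) = iteratedDeriv (j + k) f := by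
  intro k
  induction k with
  | zero => intro j f; simp
  | succ k IH =>
    intro j f
    rw [iteratedDeriv_succ', IH j (deriv f), show j + (k + 1) = (j + k) + 1 from rfl,
      iteratedDeriv_succ']

/-- Composition with `z ↦ cc * z`: iterated derivative at `0`. -/
lemma aux_iter_comp (cc : ℂ) {V : Set ℂ} (hV : IsOpen V) (h0 : (0 : ℂ) ∈ V) :
    ∀ (m : ℕ) (g : ℂ → ℂ), AnalyticOnNhd ℂ g V →
      iteratedDeriv m (fun z => g (cc * z)) 0 = cc ^ m * iteratedDeriv m g 0 := by
  have hWo : IsOpen ((fun z : ℂ => cc * z) ⁻¹' V) :=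
    hV.preimage (continuous_const.mul continuous_id)
  have h0W : (0 : ℂ) ∈ (fun z : ℂ => cc * z) ⁻¹' V := by
    simp only [Set.mem_preimage, mul_zero]; exact h0
  have hlin : AnalyticOnNhd ℂ (fun z : ℂ => cc * z) ((fun z : ℂ => cc * z) ⁻¹' V) :=
    fun z _ => (analyticAt_const.mul analyticAt_id)
  intro m
  induction m with
  | zero => intro g _; simp
  | succ m IH =>
    intro g hg
    rw [iteratedDeriv_succ', iteratedDeriv_succ']
    have hev : (deriv fun z => g (cc * z)) =ᶠ[nhds (0 : ℂ)]
        fun z => cc * deriv g (cc * z) := by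
      filter_upwards [hWo.mem_nhds h0W] with z hz
      have hd : HasDerivAt (fun z : ℂ => g (cc * z)) (deriv g (cc * z) * cc) z := by
        have h2 : HasDerivAt (fun z : ℂ => cc * z) cc z := by
          simpa using (hasDerivAt_id z).const_mul cc
        exact HasDerivAt.comp z ((hg _ hz).differentiableAt.hasDerivAt) h2
      rw [hd.deriv]; ring
    rw [Filter.EventuallyEq.iteratedDeriv_eq m hev]
    have hcomp : AnalyticOnNhd ℂ (fun z => deriv g (cc * z))
        ((fun z : ℂ => cc * z) ⁻¹' V) := by
      have := (hg.deriv_of_isOpen hV).comp hlin (fun z hz => hz)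
      exact this
    rw [aux_iter_const_mul hWo h0W cc m _ hcomp, IH (deriv g) (hg.deriv_of_isOpen hV)]
    ring

end Aux

/-- If `L f(z) = ∑_{k=1}^n c_k a_k zᵏ f⁽ᵏ⁾(cz)` satisfies `L f = λ f` on the
disk for a nonzero holomorphic `f` vanishing to order exactly `m` at `0`, then
`λ = ∑_{k=1}^{min(m,n)} c_k a_k (m!/(m-k)!) c^{m-k}` (the empty sum `0` when `m = 0`). -/
theorem stmt18 (n : ℕ) (a c : ℕ → ℂ) (cc lam : ℂ) (f : ℂ → ℂ)
    (hf : DifferentiableOn ℂ f (ball 0 1))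
    (hfne : ∃ z ∈ ball (0 : ℂ) 1, f z ≠ 0)
    (heig : ∀ z ∈ ball (0 : ℂ) 1,
      ∑ k ∈ Finset.Icc 1 n, c k * (a k * z ^ k) * iteratedDeriv k f (cc * z)
        = lam * f z)
    (m : ℕ) (hmlt : ∀ j, j < m → iteratedDeriv j f 0 = 0)
    (hm : iteratedDeriv m f 0 ≠ 0) :
    lam = ∑ k ∈ Finset.Icc 1 (min m n),
      c k * a k * ((m.factorial : ℂ) / ((m - k).factorial : ℂ)) * cc ^ (m - k) := by
  classical
  set B : Set ℂ := ball (0 : ℂ) 1 with hB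
  have hBo : IsOpen B := isOpen_ball
  have h0B : (0 : ℂ) ∈ B := mem_ball_self one_pos
  -- analyticity of f and its iterated derivatives on the ball
  have hAf : AnalyticOnNhd ℂ f B := hf.analyticOnNhd hBo
  have hAk : ∀ k : ℕ, AnalyticOnNhd ℂ (iteratedDeriv k f) B := by
    intro k
    induction k with
    | zero => simpa using hAf
    | succ k IH => rw [iteratedDeriv_succ]; exact IH.deriv_of_isOpen hBo
  -- the open set where both z and cc*z are in the ball
  set U : Set ℂ := B ∩ (fun z : ℂ => cc * z) ⁻¹' B with hU
  have hUo : IsOpen U := hBo.inter (hBo.preimage (continuous_const.mul continuous_id))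
  have h0U : (0 : ℂ) ∈ U := by
    refine ⟨h0B, ?_⟩
    simp only [Set.mem_preimage, mul_zero]; exact h0B
  -- the summand functions
  set G : ℕ → ℂ → ℂ := fun k z => c k * a k * (z ^ k * iteratedDeriv k f (cc * z)) with hG
  have hAg : ∀ k : ℕ, AnalyticOnNhd ℂ (fun z => iteratedDeriv k f (cc * z)) U := by
    intro k
    exact (hAk k).comp (fun z _ => analyticAt_const.mul analyticAt_id) (fun z hz => hz.2)
  have hAG : ∀ k : ℕ, AnalyticOnNhd ℂ (G k) U := by
    intro k
    exact analyticOnNhd_const.mul ((analyticOnNhd_id.pow k).mul (hAg k))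
  -- the two sides agree near 0
  have hev : (fun z => ∑ k ∈ Finset.Icc 1 n, G k z) =ᶠ[nhds (0 : ℂ)]
      fun z => lam * f z := by
    filter_upwards [hUo.mem_nhds h0U] with z hz
    have := heig z hz.1
    rw [← this]
    exact Finset.sum_congr rfl fun k _ => by simp only [hG]; ring
  -- compute the m-th derivative of both sides at 0
  have key : ∑ k ∈ Finset.Icc 1 n,
      c k * a k * ((m.descFactorial k : ℂ) *
        (cc ^ (m - k) * iteratedDeriv ((m - k) + k) f 0))
      = lam * iteratedDeriv m f 0 := by
    have hL : iteratedDeriv m (fun z => ∑ k ∈ Finset.Icc 1 n, G k z) 0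
        = ∑ k ∈ Finset.Icc 1 n,
          c k * a k * ((m.descFactorial k : ℂ) *
            (cc ^ (m - k) * iteratedDeriv ((m - k) + k) f 0)) := by
      rw [aux_iter_sum hUo h0U _ m G (fun k _ => hAG k)]
      refine Finset.sum_congr rfl fun k _ => ?_
      have h1 : iteratedDeriv m (G k) 0
          = c k * a k * iteratedDeriv m (fun z => z ^ k * iteratedDeriv k f (cc * z)) 0 :=
        aux_iter_const_mul hUo h0U (c k * a k) m _ ((analyticOnNhd_id.pow k).mul (hAg k))
      rw [h1, aux_iter_pow_mul hUo h0U k m _ (hAg k)]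
      have h2 : iteratedDeriv (m - k) (fun z => iteratedDeriv k f (cc * z)) 0
          = cc ^ (m - k) * iteratedDeriv (m - k) (iteratedDeriv k f) 0 :=
        aux_iter_comp cc hBo h0B (m - k) _ (hAk k)
      rw [h2, aux_iter_iter k (m - k) f]
    have hR : iteratedDeriv m (fun z => lam * f z) 0 = lam * iteratedDeriv m f 0 :=
      aux_iter_const_mul hBo h0B lam m f hAf
    rw [← hL, ← hR]
    exact Filter.EventuallyEq.iteratedDeriv_eq m hev
  -- simplify the sum: drop terms with k > m, rewrite descFactorial
  have hsum : ∑ k ∈ Finset.Icc 1 n,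
      c k * a k * ((m.descFactorial k : ℂ) *
        (cc ^ (m - k) * iteratedDeriv ((m - k) + k) f 0))
      = (∑ k ∈ Finset.Icc 1 (min m n),
          c k * a k * ((m.factorial : ℂ) / ((m - k).factorial : ℂ)) * cc ^ (m - k))
        * iteratedDeriv m f 0 := by
    rw [Finset.sum_mul]
    rw [← Finset.sum_subset (Finset.Icc_subset_Icc_right (min_le_right m n))]
    · refine Finset.sum_congr rfl fun k hk => ?_
      obtain ⟨hk1, hk2⟩ := Finset.mem_Icc.mp hk
      have hkm : k ≤ m := hk2.trans (min_le_left m n)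
      have h3 : m - k + k = m := Nat.sub_add_cancel hkm
      rw [h3]
      have h4 : (m.descFactorial k : ℂ) = (m.factorial : ℂ) / ((m - k).factorial : ℂ) := by
        rw [eq_div_iff (by exact_mod_cast (m - k).factorial_ne_zero)]
        rw [← Nat.cast_mul, mul_comm, Nat.factorial_mul_descFactorial hkm]
      rw [h4]; ring
    · intro k hk hnk
      obtain ⟨hk1, hk2⟩ := Finset.mem_Icc.mp hk
      have hmk : m < k := by
        have hni : ¬(1 ≤ k ∧ k ≤ min m n) := fun hc => hnk (Finset.mem_Icc.mpr hc)
        omega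
      rw [Nat.descFactorial_eq_zero_iff_lt.mpr hmk]
      simp
  rw [hsum] at key
  exact (mul_right_cancel₀ hm key.symm)
end
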